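/- arXiv:2204.04162 — 4 statements merged into one kernel-verified Lean document; each statement's English description precedes it below -/
import Mathlib

section
/- Let T^M assign a real threshold to each man and T^W a real threshold to each woman, and let E = {(m,w) : u(m,w) ≥ T^M(m) and v(m,w) ≥ T^W(w)}. If E contains every viable edge, then: (i) every stable matching μ of the full market satisfies (m, μ(m)) ∈ E for every man m; and (ii) a matching μ with (m, μ(m)) ∈ E for all m has no blocking pair belonging to E if and only if it has no blocking pair at all. Consequently, the stable matchings of the market restricted to the edge set E coincide exactly with the stable matchings of the full market. -/
/-- `(m, w)` is a blocking pair for the matching `μ` (a bijection men → women),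
where `u m w` is man `m`'s utility for woman `w` and `v m w` is woman `w`'s
utility for man `m`. -/
def Blocks {n : ℕ} (u v : Fin n → Fin n → ℝ) (μ : Fin n ≃ Fin n) (m w : Fin n) : Prop :=
  μ m ≠ w ∧ u m (μ m) < u m w ∧ v (μ.symm w) w < v m w

/-- A matching is stable if it has no blocking pair. -/
def IsStable {n : ℕ} (u v : Fin n → Fin n → ℝ) (μ : Fin n ≃ Fin n) : Prop :=
  ∀ m w, ¬ Blocks u v μ m w

/-- Let `E = {(m,w) : u(m,w) ≥ T^M(m) ∧ v(m,w) ≥ T^W(w)}` for thresholds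
`T^M`, `T^W`. If `E` contains every viable edge (an edge is viable if some stable matching
gives `m` at most its utility, and some stable matching gives `w` at most her utility), then:
(i) every stable matching of the full market uses only edges of `E`;
(ii) for a matching contained in `E`, having no blocking pair in `E` is equivalent to
having no blocking pair at all; and consequently
(iii) the stable matchings of the market restricted to `E` (matchings within `E` with no
blocking pair within `E`) are exactly the stable matchings of the full market. -/
theorem stmt1 {n : ℕ} (u v : Fin n → Fin n → ℝ)
    (hu : ∀ m, Function.Injective (u m))
    (hv : ∀ w, Function.Injective (fun m => v m w))
    (TM TW : Fin n → ℝ)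
    (E : Set (Fin n × Fin n))
    (hE : E = {p | TM p.1 ≤ u p.1 p.2 ∧ TW p.2 ≤ v p.1 p.2})
    (hviable : ∀ m w : Fin n,
      (∃ μ : Fin n ≃ Fin n, IsStable u v μ ∧ u m (μ m) ≤ u m w) →
      (∃ μ' : Fin n ≃ Fin n, IsStable u v μ' ∧ v (μ'.symm w) w ≤ v m w) →
      (m, w) ∈ E) :
    (∀ μ : Fin n ≃ Fin n, IsStable u v μ → ∀ m, (m, μ m) ∈ E) ∧
    (∀ μ : Fin n ≃ Fin n, (∀ m, (m, μ m) ∈ E) →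
      ((∀ m w, (m, w) ∈ E → ¬ Blocks u v μ m w) ↔ IsStable u v μ)) ∧
    (∀ μ : Fin n ≃ Fin n,
      ((∀ m, (m, μ m) ∈ E) ∧ ∀ m w, (m, w) ∈ E → ¬ Blocks u v μ m w) ↔ IsStable u v μ) := by
  subst hE
  have hIn : ∀ μ : Fin n ≃ Fin n, IsStable u v μ → ∀ m,
      (m, μ m) ∈ {p : Fin n × Fin n | TM p.1 ≤ u p.1 p.2 ∧ TW p.2 ≤ v p.1 p.2} := by
    intro μ hμ m
    exact hviable m (μ m) ⟨μ, hμ, le_refl _⟩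
      ⟨μ, hμ, by simp⟩
  have key : ∀ μ : Fin n ≃ Fin n,
      (∀ m, (m, μ m) ∈ {p : Fin n × Fin n | TM p.1 ≤ u p.1 p.2 ∧ TW p.2 ≤ v p.1 p.2}) →
      ∀ m w, Blocks u v μ m w →
        (m, w) ∈ {p : Fin n × Fin n | TM p.1 ≤ u p.1 p.2 ∧ TW p.2 ≤ v p.1 p.2} := by
    intro μ hμE m w hb
    obtain ⟨_, hu1, hv1⟩ := hb
    have h1 := (hμE m).1
    have h2 := (hμE (μ.symm w)).2
    simp only [Equiv.apply_symm_apply] at h2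
    exact ⟨le_of_lt (lt_of_le_of_lt h1 hu1), le_of_lt (lt_of_le_of_lt h2 hv1)⟩
  refine ⟨hIn, ?_, ?_⟩
  · intro μ hμE
    constructor
    · intro h m w hb
      exact h m w (key μ hμE m w hb) hb
    · intro hst m w _ hb
      exact hst m w hb
  · intro μ
    constructor
    · rintro ⟨hμE, h⟩ m w hb
      exact h m w (key μ hμE m w hb) hb
    · intro hst
      exact ⟨hIn μ hst, fun m w _ hb => hst m w hb⟩
end

section
/- The probability that there exists an index i such that the number of indices j ≠ i with X_i − α ≤ X_j < X_i is at least (3/2)·α·(n−1) is at most n·exp(−α·(n−1)/12). -/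
open MeasureTheory
open scoped ENNReal

noncomputable section

/-- The uniform probability measure on `[0,1]`. -/
def unif : Measure ℝ := volume.restrict (Set.Icc (0:ℝ) 1)

theorem lintegral_pi_prod {k : ℕ} (μ : Measure ℝ) [SigmaFinite μ] (f : Fin k → ℝ → ℝ≥0∞)
    (hf : ∀ j, Measurable (f j)) :
    ∫⁻ y : Fin k → ℝ, ∏ j, f j (y j) ∂(Measure.pi fun _ => μ) = ∏ j, ∫⁻ u, f j u ∂μ := by
  induction k with
  | zero => simp [lintegral_const, Measure.pi_univ]
  | succ k ih =>
    rw [← ((measurePreserving_piFinSuccAbove (fun _ : Fin (k+1) => μ) 0).symm).lintegral_comp_emb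
      (MeasurableEquiv.measurableEmbedding _)]
    simp only [MeasurableEquiv.piFinSuccAbove_symm_apply, Fin.insertNthEquiv, Equiv.coe_fn_mk,
      Fin.insertNth_zero, Fin.prod_univ_succ, Fin.cons_zero, Fin.cons_succ, Fin.zero_succAbove, cast_eq]
    rw [lintegral_prod_mul (f := f 0) (g := fun y : Fin k → ℝ => ∏ x : Fin k, f x.succ (y x))
      (hf 0).aemeasurable
      (Finset.measurable_prod Finset.univ
        (fun j _ => (hf j.succ).comp (measurable_pi_apply j))).aemeasurable]
    rw [ih _ fun j => hf j.succ]

instance : IsProbabilityMeasure unif := by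
  constructor
  rw [unif, Measure.restrict_apply_univ, Real.volume_Icc]
  norm_num

theorem log_32 : (7:ℝ)/18 ≤ Real.log (3/2) := by
  rw [Real.le_log_iff_exp_le (by norm_num : (0:ℝ) < 3/2)]
  have h7 : Real.exp 7 ≤ 2.7182818286 ^ 7 := by
    calc Real.exp 7 = Real.exp 1 ^ 7 := by rw [← Real.exp_nat_mul]; norm_num
    _ ≤ _ := pow_le_pow_left₀ (Real.exp_pos 1).le Real.exp_one_lt_d9.le 7
  have key : Real.exp (7/18) ^ 18 ≤ (3/2:ℝ) ^ 18 := by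
    rw [← Real.exp_nat_mul]
    calc Real.exp (18 * (7/18)) = Real.exp 7 := by norm_num
    _ ≤ 2.7182818286 ^ 7 := h7
    _ ≤ (3/2:ℝ) ^ 18 := by norm_num
  exact le_of_pow_le_pow_left₀ (by norm_num) (by norm_num) key

theorem key_bound (m : ℕ) (α : ℝ) (hα : 0 < α) (i : Fin (m+1)) :
    (Measure.pi fun _ : Fin (m+1) => unif)
      {X | (3/2) * α * ((m:ℝ)) ≤
        ((Finset.univ.filter fun j => j ≠ i ∧ X i - α ≤ X j ∧ X j < X i).card : ℝ)} ≤
      ENNReal.ofReal (Real.exp (-α * (m:ℝ) / 12)) := by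
  set μπ := Measure.pi fun _ : Fin (m+1) => unif with hμπ
  set t : ℝ := (3/2) * α * (m:ℝ) with ht
  set c : ℝ≥0∞ := ENNReal.ofReal (3/2) with hc
  have hc1 : (1:ℝ≥0∞) ≤ c := by
    rw [hc, ← ENNReal.ofReal_one]; exact ENNReal.ofReal_le_ofReal (by norm_num)
  set S : (Fin (m+1) → ℝ) → ℕ :=
    fun X => (Finset.univ.filter fun j => j ≠ i ∧ X i - α ≤ X j ∧ X j < X i).card with hS
  set F : (Fin (m+1) → ℝ) → ℝ≥0∞ := fun X => c ^ S X with hF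
  have hA : ∀ j : Fin (m+1),
      MeasurableSet {X : Fin (m+1) → ℝ | j ≠ i ∧ X i - α ≤ X j ∧ X j < X i} := by
    intro j
    exact (MeasurableSet.const _).inter
      ((measurableSet_le ((measurable_pi_apply i).sub measurable_const) (measurable_pi_apply j)).inter
       (measurableSet_lt (measurable_pi_apply j) (measurable_pi_apply i)))
  have hFeq : ∀ X, F X = ∏ j : Fin (m+1),
      (if j ≠ i ∧ X i - α ≤ X j ∧ X j < X i then c else 1) := by
    intro X
    rw [hF]
    simp only
    rw [hS]
    simp only [Finset.card_filter, ← Finset.prod_pow_eq_pow_sum]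
    exact Finset.prod_congr rfl fun j _ => by split <;> simp
  have hFmeas : Measurable F := by
    rw [show F = fun X => ∏ j : Fin (m+1),
        (if j ≠ i ∧ X i - α ≤ X j ∧ X j < X i then c else 1) from funext hFeq]
    exact Finset.measurable_prod _ fun j _ =>
      Measurable.ite (hA j) measurable_const measurable_const
  have hSmeas : Measurable S := by
    rw [show S = fun X => ∑ j : Fin (m+1),
        (if j ≠ i ∧ X i - α ≤ X j ∧ X j < X i then 1 else 0) from
      funext fun X => Finset.card_filter _ _]
    exact Finset.measurable_sum _ fun j _ =>
      Measurable.ite (hA j) measurable_const measurable_const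
  have step1 : c ^ t * μπ {X | t ≤ (S X : ℝ)} ≤ ∫⁻ X, F X ∂μπ := by
    have hpt : ∀ X ∈ {X | t ≤ (S X : ℝ)}, c ^ t ≤ F X := by
      intro X hX
      calc c ^ t ≤ c ^ ((S X : ℕ) : ℝ) := ENNReal.rpow_le_rpow_of_exponent_le hc1 hX
      _ = F X := by rw [ENNReal.rpow_natCast]
    calc c ^ t * μπ {X | t ≤ (S X : ℝ)} = ∫⁻ _ in {X | t ≤ (S X : ℝ)}, c ^ t ∂μπ :=
        (setLIntegral_const _ _).symm
    _ ≤ ∫⁻ X in {X | t ≤ (S X : ℝ)}, F X ∂μπ := setLIntegral_mono hFmeas hpt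
    _ ≤ ∫⁻ X, F X ∂μπ := setLIntegral_le_lintegral _ _
  have hone : ∀ x : ℝ, ∫⁻ u, (if x - α ≤ u ∧ u < x then c else 1) ∂unif ≤
      ENNReal.ofReal (Real.exp (α/2)) := by
    intro x
    have hpt : ∀ u : ℝ, (if x - α ≤ u ∧ u < x then c else 1) ≤
        1 + (Set.Ico (x-α) x).indicator (fun _ => ENNReal.ofReal (1/2)) u := by
      intro u
      split
      case isTrue h =>
        rw [Set.indicator_of_mem (Set.mem_Ico.2 h)]
        rw [hc, show (1:ℝ≥0∞) = ENNReal.ofReal 1 from ENNReal.ofReal_one.symm,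
          ← ENNReal.ofReal_add (by norm_num) (by norm_num)]
        exact ENNReal.ofReal_le_ofReal (by norm_num)
      case isFalse h => exact le_add_of_nonneg_right zero_le
    calc ∫⁻ u, (if x - α ≤ u ∧ u < x then c else 1) ∂unif
        ≤ ∫⁻ u, (1 + (Set.Ico (x-α) x).indicator (fun _ => ENNReal.ofReal (1/2)) u) ∂unif :=
          lintegral_mono hpt
      _ = 1 + ENNReal.ofReal (1/2) * unif (Set.Ico (x-α) x) := by
          rw [lintegral_add_left measurable_const, lintegral_one, measure_univ,
            lintegral_indicator_const measurableSet_Ico]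
      _ ≤ 1 + ENNReal.ofReal (1/2) * ENNReal.ofReal α := by
          gcongr
          calc unif (Set.Ico (x-α) x) ≤ volume (Set.Ico (x-α) x) := by
                rw [unif, Measure.restrict_apply measurableSet_Ico]
                exact measure_mono Set.inter_subset_left
            _ = ENNReal.ofReal α := by rw [Real.volume_Ico]; ring_nf
      _ = ENNReal.ofReal (1 + α/2) := by
          rw [← ENNReal.ofReal_mul (by norm_num), ← ENNReal.ofReal_one,
            ← ENNReal.ofReal_add (by norm_num) (by positivity)]
          ring_nf
      _ ≤ ENNReal.ofReal (Real.exp (α/2)) :=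
          ENNReal.ofReal_le_ofReal (by linarith [Real.add_one_le_exp (α/2)])
  have step2 : ∫⁻ X, F X ∂μπ ≤ ENNReal.ofReal (Real.exp (α * (m:ℝ) / 2)) := by
    have hmp := (measurePreserving_piFinSuccAbove (fun _ : Fin (m+1) => unif) i).symm
    rw [show F = fun X => ∏ j : Fin (m+1),
        (if j ≠ i ∧ X i - α ≤ X j ∧ X j < X i then c else 1) from funext hFeq]
    rw [hμπ, ← hmp.lintegral_comp_emb (MeasurableEquiv.measurableEmbedding _)]
    simp only [MeasurableEquiv.piFinSuccAbove_symm_apply, Fin.insertNthEquiv, Equiv.coe_fn_mk]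
    simp_rw [Fin.prod_univ_succAbove (x := i), Fin.insertNth_apply_same,
      Fin.insertNth_apply_succAbove, ne_eq, not_true_eq_false, false_and, if_false, one_mul,
      Fin.succAbove_ne, not_false_eq_true, true_and]
    have hmeas2 : Measurable fun p : ℝ × (Fin m → ℝ) =>
        ∏ j : Fin m, (if p.1 - α ≤ p.2 j ∧ p.2 j < p.1 then c else 1) := by
      refine Finset.measurable_prod _ fun j _ => Measurable.ite ?_ measurable_const measurable_const
      have hev : Measurable fun p : ℝ × (Fin m → ℝ) => p.2 j := measurable_snd.eval
      exact (measurableSet_le (measurable_fst.sub measurable_const) hev).inter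
        (measurableSet_lt hev measurable_fst)
    rw [lintegral_prod _ hmeas2.aemeasurable]
    calc ∫⁻ x, ∫⁻ y, ∏ j : Fin m, (if x - α ≤ y j ∧ y j < x then c else 1)
          ∂(Measure.pi fun _ : Fin m => unif) ∂unif
        ≤ ∫⁻ _, ENNReal.ofReal (Real.exp (α * (m:ℝ) / 2)) ∂unif := by
          refine lintegral_mono fun x => ?_
          rw [lintegral_pi_prod unif (fun _ u => if x - α ≤ u ∧ u < x then c else 1)
            (fun _ => Measurable.ite ((measurableSet_le measurable_const measurable_id).inter
              (measurableSet_lt measurable_id measurable_const))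
              measurable_const measurable_const)]
          rw [Finset.prod_const, Finset.card_univ, Fintype.card_fin]
          calc (∫⁻ u, (if x - α ≤ u ∧ u < x then c else 1) ∂unif) ^ m
              ≤ ENNReal.ofReal (Real.exp (α/2)) ^ m := pow_le_pow_left₀ zero_le (hone x) m
            _ = ENNReal.ofReal (Real.exp (α/2) ^ m) := by
                rw [ENNReal.ofReal_pow (Real.exp_pos _).le]
            _ = ENNReal.ofReal (Real.exp (α * (m:ℝ) / 2)) := by
                rw [← Real.exp_nat_mul]
                ring_nf
      _ = ENNReal.ofReal (Real.exp (α * (m:ℝ) / 2)) := by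
          rw [lintegral_const, measure_univ, mul_one]
  -- combine
  have hct : c ^ t = ENNReal.ofReal ((3/2:ℝ) ^ t) := by
    rw [hc]; exact ENNReal.ofReal_rpow_of_pos (by norm_num)
  have hreal : Real.exp (α * (m:ℝ) / 2) ≤ Real.exp (-α * (m:ℝ) / 12) * (3/2:ℝ) ^ t := by
    rw [Real.rpow_def_of_pos (by norm_num : (0:ℝ) < 3/2), ← Real.exp_add, Real.exp_le_exp, ht]
    have hz : 0 ≤ α * (m:ℝ) := mul_nonneg hα.le (Nat.cast_nonneg m)
    nlinarith [mul_le_mul_of_nonneg_right log_32 hz]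
  have step3 : c ^ t * μπ {X | t ≤ (S X : ℝ)} ≤
      c ^ t * ENNReal.ofReal (Real.exp (-α * (m:ℝ) / 12)) := by
    refine (step1.trans step2).trans ?_
    rw [hct, ← ENNReal.ofReal_mul (by positivity)]
    exact ENNReal.ofReal_le_ofReal (by rw [mul_comm] at hreal ⊢; linarith [hreal])
  have h0 : c ^ t ≠ 0 := by
    rw [hct]; exact (ENNReal.ofReal_pos.2 (Real.rpow_pos_of_pos (by norm_num) t)).ne'
  have htop : c ^ t ≠ ⊤ := by rw [hct]; exact ENNReal.ofReal_ne_top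
  exact (ENNReal.mul_le_mul_iff_right h0 htop).mp step3


/-- For `X_1, …, X_n` i.i.d. uniform on `[0,1]` and `α > 0`, the
probability that some index `i` has at least `(3/2)·α·(n-1)` indices `j ≠ i` with
`X_i - α ≤ X_j < X_i` is at most `n · exp(-α(n-1)/12)`. -/
theorem stmt2 (n : ℕ) (α : ℝ) (hα : 0 < α) :
    (Measure.pi fun _ : Fin n => unif)
      {X | ∃ i : Fin n, (3/2) * α * ((n : ℝ) - 1) ≤
        ((Finset.univ.filter fun j => j ≠ i ∧ X i - α ≤ X j ∧ X j < X i).card : ℝ)} ≤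
      ENNReal.ofReal (n * Real.exp (-α * ((n : ℝ) - 1) / 12)) := by
  obtain _ | m := n
  · simp
  · have hcast : ((m+1 : ℕ) : ℝ) - 1 = (m : ℝ) := by push_cast; ring
    simp only [hcast]
    have hset : {X : Fin (m+1) → ℝ | ∃ i : Fin (m+1), (3/2) * α * (m:ℝ) ≤
          ((Finset.univ.filter fun j => j ≠ i ∧ X i - α ≤ X j ∧ X j < X i).card : ℝ)}
        = ⋃ i : Fin (m+1), {X : Fin (m+1) → ℝ | (3/2) * α * (m:ℝ) ≤
          ((Finset.univ.filter fun j => j ≠ i ∧ X i - α ≤ X j ∧ X j < X i).card : ℝ)} := by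
      ext X
      simp [Set.mem_iUnion]
    rw [hset]
    refine le_trans (measure_iUnion_fintype_le _ _) ?_
    refine le_trans (Finset.sum_le_sum fun i _ => key_bound m α hα i) ?_
    rw [Finset.sum_const, Finset.card_univ, Fintype.card_fin, nsmul_eq_mul,
      ENNReal.ofReal_mul (Nat.cast_nonneg _), ENNReal.ofReal_natCast]

end
end

section
/- The probability that there exists an index i with X_i ≥ 3α such that the number of indices j ≠ i with X_i − 3α ≤ X_j < X_i is at most (5/2)·α·(n−1) is at most n·exp(−α·(n−1)/24). -/
open MeasureTheory Real ENNReal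

noncomputable section

lemma unif_univ : unif Set.univ = 1 := by simp [unif, Real.volume_Icc]

instance inst_s3 : IsProbabilityMeasure unif := ⟨unif_univ⟩


lemma lintegral_pi_pow : ∀ (m : ℕ) (g : ℝ → ℝ≥0∞), Measurable g →
    ∫⁻ y, ∏ j, g (y j) ∂(Measure.pi fun _ : Fin m => unif) = (∫⁻ x, g x ∂unif) ^ m := by
  intro m
  induction m with
  | zero => intro g hg; simp
  | succ m ih =>
    intro g hg
    have hmp := (measurePreserving_piFinSuccAbove (fun _ : Fin (m+1) => unif) 0).symm
    rw [hmp.lintegral_map_equiv (fun y => ∏ j, g (y j))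
      (MeasurableEquiv.piFinSuccAbove (fun _ => ℝ) 0).symm]
    simp only [MeasurableEquiv.piFinSuccAbove_symm_apply, Fin.insertNthEquiv, Fin.insertNth_zero,
      Fin.prod_univ_succ, Equiv.coe_fn_mk, cast_eq, Fin.cons_zero, Fin.cons_succ]
    have h2 : Measurable fun y : Fin m → ℝ => ∏ j, g (y j) :=
      Finset.measurable_prod Finset.univ fun j _ => hg.comp (measurable_pi_apply j)
    rw [lintegral_prod_mul hg.aemeasurable h2.aemeasurable, ih g hg, pow_succ]
    ring

lemma prod_erase_eq {m : ℕ} (G : Fin (m+1) → ℝ≥0∞) (i : Fin (m+1)) (hG0 : G i ≠ 0)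
    (hGt : G i ≠ ⊤) :
    ∏ j ∈ Finset.univ.erase i, G j = ∏ j : Fin m, G (i.succAbove j) :=
  (ENNReal.mul_right_inj hG0 hGt).mp
    ((Finset.mul_prod_erase Finset.univ G (Finset.mem_univ i)).trans
      (Fin.prod_univ_succAbove G i))

lemma beta_le : Real.exp (-(1/6)) ≤ 61/72 := by
  have h72 : (72:ℝ)/61 ≤ Real.exp (1/6) := by
    have := Real.quadratic_le_exp_of_nonneg (by norm_num : (0:ℝ) ≤ 1/6)
    nlinarith
  have h1 : Real.exp (-(1/6)) * Real.exp (1/6) = 1 := by rw [← Real.exp_add]; norm_num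
  nlinarith [Real.exp_pos (-(1/6):ℝ), mul_nonneg (Real.exp_pos (-(1/6):ℝ)).le (sub_nonneg.2 h72)]

lemma key (m : ℕ) (α : ℝ) (hα : 0 < α) (i : Fin (m+1)) :
    (Measure.pi fun _ : Fin (m+1) => unif)
      {X | 3 * α ≤ X i ∧
        ((Finset.univ.filter fun j => j ≠ i ∧ X i - 3*α ≤ X j ∧ X j < X i).card : ℝ) ≤
          (5/2) * α * m} ≤ ENNReal.ofReal (Real.exp (-α * m / 24)) := by
  classical
  set β0 : ℝ := Real.exp (-(1/6)) with hβ0def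
  have hβ0pos : 0 < β0 := Real.exp_pos _
  set c : ℝ≥0∞ := ENNReal.ofReal (Real.exp ((5/2)*α*m/6)) with hcdef
  set g : ℝ → ℝ → ℝ≥0∞ :=
    fun x y => if y ∈ Set.Ico (x - 3*α) x then ENNReal.ofReal β0 else 1 with hgdef
  set h : ℝ → ℝ≥0∞ := fun x => if 3*α ≤ x then 1 else 0 with hhdef
  set F : (Fin (m+1) → ℝ) → ℝ≥0∞ :=
    fun X => c * h (X i) * ∏ j ∈ Finset.univ.erase i, g (X i) (X j) with hFdef
  -- measurability of F
  have hgm : ∀ j : Fin (m+1), Measurable fun X : Fin (m+1) → ℝ => g (X i) (X j) := by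
    intro j
    apply Measurable.ite _ measurable_const measurable_const
    have : {X : Fin (m+1) → ℝ | X j ∈ Set.Ico (X i - 3*α) (X i)}
        = {X : Fin (m+1) → ℝ | X i - 3*α ≤ X j} ∩ {X | X j < X i} := by
      ext X; simp [Set.mem_Ico]
    rw [this]
    exact (measurableSet_le ((measurable_pi_apply i).sub measurable_const)
        (measurable_pi_apply j)).inter
      (measurableSet_lt (measurable_pi_apply j) (measurable_pi_apply i))
  have hhm : Measurable fun X : Fin (m+1) → ℝ => h (X i) :=
    Measurable.ite (measurableSet_le measurable_const (measurable_pi_apply i))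
      measurable_const measurable_const
  have hF : Measurable F := by
    apply (Measurable.const_mul hhm c).mul
    exact Finset.measurable_prod _ fun j _ => hgm j
  -- Step 1 : event is contained in {1 ≤ F}
  have hsub : {X : Fin (m+1) → ℝ | 3 * α ≤ X i ∧
      ((Finset.univ.filter fun j => j ≠ i ∧ X i - 3*α ≤ X j ∧ X j < X i).card : ℝ) ≤
        (5/2) * α * m} ⊆ {X | 1 ≤ F X} := by
    rintro X ⟨hXi, hN⟩
    set N := (Finset.univ.filter fun j => j ≠ i ∧ X i - 3*α ≤ X j ∧ X j < X i).card with hNdef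
    have hfilter : (Finset.univ.filter fun j => j ≠ i ∧ X i - 3*α ≤ X j ∧ X j < X i)
        = (Finset.univ.erase i).filter fun j => X j ∈ Set.Ico (X i - 3*α) (X i) := by
      ext j
      simp [Set.mem_Ico, Finset.mem_erase, and_assoc]
    have hprod : ∏ j ∈ Finset.univ.erase i, g (X i) (X j) = ENNReal.ofReal β0 ^ N := by
      rw [hgdef]
      rw [Finset.prod_ite (fun _ => ENNReal.ofReal β0) (fun _ => (1:ℝ≥0∞)),
        Finset.prod_const, Finset.prod_const_one, mul_one, hNdef, hfilter]
    have hh1 : h (X i) = 1 := if_pos hXi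
    show (1:ℝ≥0∞) ≤ F X
    rw [hFdef]
    simp only []
    rw [hprod, hh1, mul_one, ← ENNReal.ofReal_pow hβ0pos.le,
      ← ENNReal.ofReal_mul (Real.exp_pos _).le]
    rw [show β0 ^ N = Real.exp (N * (-(1/6))) by rw [Real.exp_nat_mul], ← Real.exp_add]
    refine ENNReal.one_le_ofReal.mpr (Real.one_le_exp ?_)
    have hN' : (N:ℝ) ≤ (5/2) * α * m := hN
    linarith
  -- Step 2 : Markov
  refine le_trans (measure_mono hsub) ?_
  refine le_trans (by simpa using mul_meas_ge_le_lintegral hF 1) ?_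
  -- Step 3 : transport along insertNth
  have hmp := (measurePreserving_piFinSuccAbove (fun _ : Fin (m+1) => unif) i).symm
  rw [hmp.lintegral_map_equiv F (MeasurableEquiv.piFinSuccAbove (fun _ => ℝ) i).symm]
  have hg0 : ∀ x y : ℝ, g x y ≠ 0 := by
    intro x y
    show (if y ∈ Set.Ico (x - 3*α) x then ENNReal.ofReal β0 else 1) ≠ 0
    split
    · simp [ENNReal.ofReal_pos, hβ0pos]
    · simp
  have hgt : ∀ x y : ℝ, g x y ≠ ⊤ := by
    intro x y
    show (if y ∈ Set.Ico (x - 3*α) x then ENNReal.ofReal β0 else 1) ≠ ⊤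
    split <;> simp
  have hint : ∀ z : ℝ × (Fin m → ℝ),
      F ((MeasurableEquiv.piFinSuccAbove (fun _ => ℝ) i).symm z)
        = c * h z.1 * ∏ j : Fin m, g z.1 (z.2 j) := by
    rintro ⟨x, y⟩
    have he : (MeasurableEquiv.piFinSuccAbove (fun _ => ℝ) i).symm (x, y)
        = i.insertNth x y := by
      simp [MeasurableEquiv.piFinSuccAbove_symm_apply, Fin.insertNthEquiv]
    rw [he, hFdef]
    simp only []
    rw [Fin.insertNth_apply_same]
    congr 1
    rw [prod_erase_eq _ i (hg0 _ _) (hgt _ _)]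
    exact Finset.prod_congr rfl fun j _ => by rw [Fin.insertNth_apply_succAbove]
  rw [lintegral_congr hint]
  -- Step 4 : Fubini
  have hginner : ∀ x : ℝ, Measurable (g x) := by
    intro x
    exact Measurable.ite (measurableSet_Ico : MeasurableSet (Set.Ico (x - 3*α) x))
      measurable_const measurable_const
  have hf2m : Measurable fun z : ℝ × (Fin m → ℝ) => c * h z.1 * ∏ j, g z.1 (z.2 j) := by
    apply Measurable.mul
    · apply Measurable.const_mul
      exact (Measurable.ite (measurableSet_le measurable_const measurable_fst)
        measurable_const measurable_const)
    · apply Finset.measurable_prod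
      intro j _
      apply Measurable.ite _ measurable_const measurable_const
      have : {z : ℝ × (Fin m → ℝ) | z.2 j ∈ Set.Ico (z.1 - 3*α) z.1}
          = {z : ℝ × (Fin m → ℝ) | z.1 - 3*α ≤ z.2 j} ∩ {z | z.2 j < z.1} := by
        ext z; simp [Set.mem_Ico]
      rw [this]
      have hev : Measurable fun z : ℝ × (Fin m → ℝ) => z.2 j :=
        (measurable_pi_apply j).comp measurable_snd
      exact (measurableSet_le (measurable_fst.sub measurable_const) hev).inter
        (measurableSet_lt hev measurable_fst)
  rw [lintegral_prod _ hf2m.aemeasurable]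
  have hinner : ∀ x : ℝ,
      (∫⁻ y, c * h x * ∏ j, g x (y j) ∂(Measure.pi fun _ : Fin m => unif))
        = c * h x * (∫⁻ y, g x y ∂unif) ^ m := by
    intro x
    rw [lintegral_const_mul _
      (show Measurable fun y : Fin m → ℝ => ∏ j, g x (y j) from
        Finset.measurable_prod _ fun j _ => (hginner x).comp (measurable_pi_apply j)),
      lintegral_pi_pow m (g x) (hginner x)]
  simp only [hinner]
  -- Step 5 : pointwise bound on the inner integral
  set D : ℝ≥0∞ := ENNReal.ofReal (Real.exp (-(3*α*(1-β0)))) ^ m with hDdef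
  have hbound : ∀ᵐ x ∂unif, c * h x * (∫⁻ y, g x y ∂unif) ^ m ≤ c * D := by
    have hae : ∀ᵐ x ∂unif, x ∈ Set.Icc (0:ℝ) 1 := ae_restrict_mem measurableSet_Icc
    filter_upwards [hae] with x hx
    by_cases h3x : 3*α ≤ x
    · have hh1 : h x = 1 := if_pos h3x
      have h3α1 : 3*α ≤ 1 := le_trans h3x hx.2
      have hS : MeasurableSet (Set.Ico (x - 3*α) x) := measurableSet_Ico
      have hmS : unif (Set.Ico (x - 3*α) x) = ENNReal.ofReal (3*α) := by
        rw [unif, Measure.restrict_apply hS, Set.inter_eq_left.2, Real.volume_Ico]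
        · norm_num
        · intro y hy
          refine ⟨le_trans (by linarith) hy.1, le_trans (le_of_lt hy.2) hx.2⟩
      have hI : ∫⁻ y, g x y ∂unif
          = ENNReal.ofReal β0 * ENNReal.ofReal (3*α) + (1 - ENNReal.ofReal (3*α)) := by
        rw [← lintegral_add_compl _ hS]
        have e1 : ∫⁻ y in Set.Ico (x - 3*α) x, g x y ∂unif
            = ENNReal.ofReal β0 * ENNReal.ofReal (3*α) := by
          rw [setLIntegral_congr_fun hS (fun y hy => if_pos hy),
            setLIntegral_const, hmS]
        have e2 : ∫⁻ y in (Set.Ico (x - 3*α) x)ᶜ, g x y ∂unif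
            = 1 - ENNReal.ofReal (3*α) := by
          rw [setLIntegral_congr_fun hS.compl (fun y hy => if_neg hy),
            setLIntegral_one, measure_compl hS (measure_ne_top _ _), hmS, measure_univ]
        rw [e1, e2]
      have hIle : ∫⁻ y, g x y ∂unif ≤ ENNReal.ofReal (Real.exp (-(3*α*(1-β0)))) := by
        rw [hI, ← ENNReal.ofReal_mul hβ0pos.le, ← ENNReal.ofReal_one,
          ← ENNReal.ofReal_sub _ (by positivity), ← ENNReal.ofReal_add (by positivity)
            (by linarith)]
        apply ENNReal.ofReal_le_ofReal
        nlinarith [Real.add_one_le_exp (-(3*α*(1-β0)))]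
      rw [hh1, mul_one]
      rw [hDdef]
      gcongr
    · have hh0 : h x = 0 := if_neg h3x
      rw [hh0]
      simp
  refine le_trans (lintegral_mono_ae hbound) ?_
  rw [lintegral_const, measure_univ, mul_one]
  -- Step 6 : numeric conclusion
  rw [hcdef, hDdef, ← ENNReal.ofReal_pow (Real.exp_pos _).le, ← Real.exp_nat_mul,
    ← ENNReal.ofReal_mul (Real.exp_pos _).le, ← Real.exp_add]
  apply ENNReal.ofReal_le_ofReal
  apply Real.exp_le_exp.mpr
  have hb := beta_le
  have hm0 : (0:ℝ) ≤ m := Nat.cast_nonneg m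
  have hkey : 3 * (α * m) * β0 ≤ 3 * (α * m) * (61/72) := by
    apply mul_le_mul_of_nonneg_left hb
    positivity
  nlinarith [hkey]

/-- For `X_1, …, X_n` i.i.d. uniform on `[0,1]` and `α > 0`, the
probability that some index `i` with `X_i ≥ 3α` has at most `(5/2)·α·(n-1)` indices
`j ≠ i` with `X_i - 3α ≤ X_j < X_i` is at most `n · exp(-α(n-1)/24)`. -/
theorem stmt3 (n : ℕ) (α : ℝ) (hα : 0 < α) :
    (Measure.pi fun _ : Fin n => unif)
      {X | ∃ i : Fin n, 3 * α ≤ X i ∧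
        ((Finset.univ.filter fun j => j ≠ i ∧ X i - 3*α ≤ X j ∧ X j < X i).card : ℝ) ≤
          (5/2) * α * ((n : ℝ) - 1)} ≤
      ENNReal.ofReal (n * Real.exp (-α * ((n : ℝ) - 1) / 24)) := by
  obtain _ | m := n
  · simp only [IsEmpty.exists_iff, Set.setOf_false, measure_empty]
    exact zero_le
  · have hcast : ((m + 1 : ℕ) : ℝ) - 1 = (m : ℝ) := by push_cast; ring
    simp only [hcast, Set.setOf_exists]
    refine le_trans (measure_iUnion_le _) ?_
    rw [tsum_fintype]
    calc ∑ i : Fin (m+1), (Measure.pi fun _ : Fin (m+1) => unif)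
          {X | 3 * α ≤ X i ∧
            ((Finset.univ.filter fun j => j ≠ i ∧ X i - 3*α ≤ X j ∧ X j < X i).card : ℝ) ≤
              (5/2) * α * m}
        ≤ ∑ _i : Fin (m+1), ENNReal.ofReal (Real.exp (-α * m / 24)) :=
          Finset.sum_le_sum fun i _ => key m α hα i
      _ = ENNReal.ofReal ((m + 1 : ℕ) * Real.exp (-α * m / 24)) := by
          rw [Finset.sum_const, Finset.card_univ, Fintype.card_fin, nsmul_eq_mul,
            ENNReal.ofReal_mul (by positivity), ENNReal.ofReal_natCast]


end
end

section
/- The probability of event B5 is at most n²·exp(−L·(n−2)/8). -/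
open MeasureTheory Finset
open scoped ENNReal

noncomputable section

/-- Joint law of the men's and women's public ratings: `2n` i.i.d. uniforms on `[0,1]`. -/
def ratingsMeasure (n : ℕ) : Measure ((Fin n → ℝ) × (Fin n → ℝ)) :=
  (Measure.pi fun _ => unif).prod (Measure.pi fun _ => unif)

/-- 0-indexed rank: the number of agents with strictly larger rating. -/
def rankOf {n : ℕ} (r : Fin n → ℝ) (a : Fin n) : ℕ :=
  (Finset.univ.filter fun b => r a < r b).card

/-- Number of agents whose rating lies in the closed interval with endpoints `s` and `t`. -/
def countBetween {n : ℕ} (r : Fin n → ℝ) (s t : ℝ) : ℕ :=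
  (Finset.univ.filter fun m => min s t ≤ r m ∧ r m ≤ max s t).card

/-- Event B5: for some pair of ranks `i ≠ j` (with `m = m_i`, `m' = m_j`, `w = w_i`,
`w' = w_j`, `x = r_m − r_{m'}`, `y = r_w − r_{w'}`), either `|y| > 4L` and the number
of women with ratings between `r_w` and `r_{w'}` is at most `2 + 3L(n−2)`, or
`|x| > 4L` and the number of men with ratings between `r_m` and `r_{m'}` is at most
`2 + 3L(n−2)`. -/
def EventB5 (n : ℕ) (L : ℝ) (rM rW : Fin n → ℝ) : Prop :=
  ∃ a a' b b' : Fin n, a ≠ a' ∧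
    rankOf rM a = rankOf rW b ∧ rankOf rM a' = rankOf rW b' ∧
    ((4*L < |rW b - rW b'| ∧
        (countBetween rW (rW b) (rW b') : ℝ) ≤ 2 + 3*L*((n:ℝ)-2)) ∨
     (4*L < |rM a - rM a'| ∧
        (countBetween rM (rM a) (rM a') : ℝ) ≤ 2 + 3*L*((n:ℝ)-2)))



instance unif_prob : IsProbabilityMeasure unif := by
  constructor
  simp [unif, Measure.restrict_apply MeasurableSet.univ, Real.volume_Icc]

lemma unif_Icc {a c : ℝ} (h0 : 0 ≤ a) (h1 : c ≤ 1) (hac : a ≤ c) :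
    unif (Set.Icc a c) = ENNReal.ofReal (c - a) := by
  rw [unif, Measure.restrict_apply measurableSet_Icc,
    Set.inter_eq_self_of_subset_left (Set.Icc_subset_Icc h0 h1), Real.volume_Icc]

lemma exp_quarter_lt : Real.exp (-(4⁻¹ : ℝ)) ≤ 25/32 := by
  have h : (493:ℝ)/384 ≤ Real.exp (4⁻¹) := by
    have := Real.sum_le_exp_of_nonneg (x := (4:ℝ)⁻¹) (by norm_num) 4
    norm_num [Finset.sum_range_succ, Nat.factorial] at this
    linarith
  rw [Real.exp_neg]
  rw [inv_le_comm₀ (Real.exp_pos _) (by norm_num)]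
  linarith

lemma key_const : (3:ℝ)/4 - 4*(1 - Real.exp (-(4⁻¹:ℝ))) ≤ -(8⁻¹) := by
  have := exp_quarter_lt; linarith


lemma lintegral_pi_fin_prod {n : ℕ} (μ : Measure ℝ) [SigmaFinite μ]
    (g : ℝ → ℝ≥0∞) (hg : Measurable g) :
    ∫⁻ u : Fin n → ℝ, ∏ i, g (u i) ∂(Measure.pi fun _ => μ) = (∫⁻ x, g x ∂μ) ^ n := by
  induction n with
  | zero => simp
  | succ n ih =>
    have h := measurePreserving_piFinSuccAbove (fun _ : Fin (n+1) => μ) 0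
    have hmeas : Measurable fun z : ℝ × (Fin n → ℝ) => g z.1 * ∏ j, g (z.2 j) := by
      apply Measurable.mul (hg.comp measurable_fst)
      exact Finset.measurable_prod _ fun j _ =>
        hg.comp ((measurable_pi_apply j).comp measurable_snd)
    have key := h.lintegral_comp hmeas
    simp only [MeasurableEquiv.piFinSuccAbove_apply, Fin.insertNthEquiv_symm_apply,
      Fin.removeNth] at key
    calc ∫⁻ u : Fin (n+1) → ℝ, ∏ i, g (u i) ∂(Measure.pi fun _ => μ)
        = ∫⁻ u : Fin (n+1) → ℝ, g (u 0) * ∏ j : Fin n, g (u ((0:Fin (n+1)).succAbove j))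
            ∂(Measure.pi fun _ => μ) := by
          congr 1; funext u; rw [Fin.prod_univ_succAbove (fun i => g (u i)) 0]
      _ = ∫⁻ z : ℝ × (Fin n → ℝ), g z.1 * ∏ j, g (z.2 j)
            ∂(μ.prod (Measure.pi fun _ : Fin n => μ)) := by
          rw [← key]
      _ = (∫⁻ x, g x ∂μ) * ∫⁻ u : Fin n → ℝ, ∏ j, g (u j) ∂(Measure.pi fun _ => μ) :=
          lintegral_prod_mul (f := g) (g := fun u : Fin n → ℝ => ∏ j, g (u j))
            hg.aemeasurable
            ((Finset.measurable_prod univ fun j _ =>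
              hg.comp (measurable_pi_apply j)).aemeasurable)
      _ = (∫⁻ x, g x ∂μ) ^ (n+1) := by rw [ih]; ring

lemma lintegral_pi_prod_s12 {ι : Type*} [Fintype ι] (μ : Measure ℝ) [SigmaFinite μ]
    (g : ℝ → ℝ≥0∞) (hg : Measurable g) :
    ∫⁻ u : ι → ℝ, ∏ i, g (u i) ∂(Measure.pi fun _ => μ)
      = (∫⁻ x, g x ∂μ) ^ (Fintype.card ι) := by
  let e := (Fintype.equivFin ι).symm
  have h := measurePreserving_piCongrLeft (fun _ : ι => μ) e
  have hmeas : Measurable fun u : ι → ℝ => ∏ i, g (u i) :=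
    Finset.measurable_prod _ fun i _ => hg.comp (measurable_pi_apply i)
  have key := h.lintegral_comp hmeas
  rw [← key, ← lintegral_pi_fin_prod μ g hg]
  congr 1; funext u
  simp only [MeasurableEquiv.coe_piCongrLeft]
  rw [← Equiv.prod_comp e (fun i => g ((Equiv.piCongrLeft (fun _ => ℝ) e) u i))]
  exact Finset.prod_congr rfl fun j _ =>
    congrArg g (Equiv.piCongrLeft_apply_apply (fun _ => ℝ) e u j)

lemma measurable_countIcc {ι : Type*} [Fintype ι] (a c : ℝ) :
    Measurable fun u : ι → ℝ =>
      ((Finset.univ.filter fun i => a ≤ u i ∧ u i ≤ c).card : ℝ) := by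
  classical
  simp only [Finset.natCast_card_filter]
  apply Finset.measurable_sum
  intro i _
  apply Measurable.ite _ measurable_const measurable_const
  exact (measurableSet_le measurable_const (measurable_pi_apply i)).inter
    (measurableSet_le (measurable_pi_apply i) measurable_const)

lemma chernoff {ι : Type*} [Fintype ι] {L a c : ℝ} (hL : 0 < L)
    (hac : 4*L ≤ c - a) (h0 : 0 ≤ a) (h1 : c ≤ 1) :
    (Measure.pi fun _ : ι => unif)
      {u | ((Finset.univ.filter fun i => a ≤ u i ∧ u i ≤ c).card : ℝ)
          ≤ 3*L*(Fintype.card ι)} ≤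
      ENNReal.ofReal (Real.exp (-L * (Fintype.card ι) / 8)) := by
  classical
  set m := Fintype.card ι with hm
  set E0 : ℝ := Real.exp (-(4⁻¹:ℝ)) with hE0
  have hE0pos : 0 < E0 := Real.exp_pos _
  have hE0le : E0 ≤ 1 := Real.exp_le_one_iff.mpr (by norm_num)
  have hacle : a ≤ c := by nlinarith
  have hq1 : c - a ≤ 1 := by linarith
  set g : ℝ → ℝ≥0∞ := fun x => if a ≤ x ∧ x ≤ c then ENNReal.ofReal E0 else 1 with hgdef
  have hgmeas : Measurable g := by
    apply Measurable.ite _ measurable_const measurable_const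
    exact (measurableSet_le measurable_const measurable_id).inter
      (measurableSet_le measurable_id measurable_const)
  have hunifI : unif (Set.Icc a c) = ENNReal.ofReal (c - a) := unif_Icc h0 h1 hacle
  have hunifIc : unif (Set.Icc a c)ᶜ = ENNReal.ofReal (1 - (c - a)) := by
    rw [measure_compl measurableSet_Icc (measure_ne_top _ _), hunifI]
    rw [show (unif Set.univ) = 1 from measure_univ]
    rw [← ENNReal.ofReal_one, ← ENNReal.ofReal_sub _ (by linarith)]
  have hgint : ∫⁻ x, g x ∂unif ≤ ENNReal.ofReal (Real.exp (-(4*L*(1 - E0)))) := by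
    have hrep : g = (Set.Icc a c).indicator (fun _ => ENNReal.ofReal E0) +
        ((Set.Icc a c)ᶜ).indicator (fun _ => 1) := by
      funext x
      by_cases hx : a ≤ x ∧ x ≤ c <;>
        simp [hgdef, hx, Set.indicator_apply, Set.mem_Icc, Set.mem_compl_iff]
    rw [hrep]
    simp only [Pi.add_apply]
    rw [lintegral_add_left ((measurable_const).indicator measurableSet_Icc),
      lintegral_indicator_const measurableSet_Icc,
      lintegral_indicator_const measurableSet_Icc.compl,
      hunifI, hunifIc,
      ← ENNReal.ofReal_mul hE0pos.le, one_mul,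
      ← ENNReal.ofReal_add (by nlinarith) (by nlinarith)]
    apply ENNReal.ofReal_le_ofReal
    have h3 := Real.add_one_le_exp (-((c-a) * (1 - E0)))
    have h4 : Real.exp (-((c-a) * (1 - E0))) ≤ Real.exp (-(4*L*(1 - E0))) := by
      apply Real.exp_le_exp.mpr; nlinarith
    nlinarith
  set F : (ι → ℝ) → ℝ≥0∞ := fun u => ∏ i, g (u i) with hF
  have hFmeas : Measurable F :=
    Finset.measurable_prod _ fun i _ => hgmeas.comp (measurable_pi_apply i)
  set c0 : ℝ≥0∞ := ENNReal.ofReal (Real.exp (3*L*m/4)) with hc0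
  have hprod : ∀ u : ι → ℝ,
      F u = ENNReal.ofReal (Real.exp
        (-(((Finset.univ.filter fun i => a ≤ u i ∧ u i ≤ c).card : ℝ)/4))) := by
    intro u
    rw [hF]
    simp only [hgdef]
    rw [Finset.prod_ite, Finset.prod_const, Finset.prod_const, one_pow, mul_one,
      ← ENNReal.ofReal_pow hE0pos.le, hE0, ← Real.exp_nat_mul]
    congr 2
    ring
  have hkey : ∀ u ∈ {u : ι → ℝ |
      ((Finset.univ.filter fun i => a ≤ u i ∧ u i ≤ c).card : ℝ) ≤ 3*L*m},
      1 ≤ c0 * F u := by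
    intro u hu
    rw [hprod u, hc0, ← ENNReal.ofReal_mul (Real.exp_pos _).le, ← Real.exp_add]
    have h5 : (0:ℝ) ≤ 3*L*m/4 +
        -(((Finset.univ.filter fun i => a ≤ u i ∧ u i ≤ c).card : ℝ)/4) := by
      have := hu; simp only [Set.mem_setOf_eq] at this; linarith
    calc (1:ℝ≥0∞) = ENNReal.ofReal (Real.exp 0) := by simp
      _ ≤ _ := ENNReal.ofReal_le_ofReal (Real.exp_le_exp.mpr h5)
  calc (Measure.pi fun _ : ι => unif)
        {u | ((Finset.univ.filter fun i => a ≤ u i ∧ u i ≤ c).card : ℝ) ≤ 3*L*m}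
      = ∫⁻ _ in {u : ι → ℝ |
          ((Finset.univ.filter fun i => a ≤ u i ∧ u i ≤ c).card : ℝ) ≤ 3*L*m},
          1 ∂(Measure.pi fun _ : ι => unif) := (setLIntegral_one _).symm
    _ ≤ ∫⁻ u in {u : ι → ℝ |
          ((Finset.univ.filter fun i => a ≤ u i ∧ u i ≤ c).card : ℝ) ≤ 3*L*m},
          c0 * F u ∂(Measure.pi fun _ : ι => unif) :=
        setLIntegral_mono (measurable_const.mul hFmeas) hkey
    _ ≤ ∫⁻ u, c0 * F u ∂(Measure.pi fun _ : ι => unif) :=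
        setLIntegral_le_lintegral _ _
    _ = c0 * ∫⁻ u, F u ∂(Measure.pi fun _ : ι => unif) :=
        lintegral_const_mul c0 hFmeas
    _ = c0 * (∫⁻ x, g x ∂unif) ^ m := by rw [hF, lintegral_pi_prod_s12 unif g hgmeas]
    _ ≤ c0 * (ENNReal.ofReal (Real.exp (-(4*L*(1 - E0))))) ^ m := by gcongr
    _ = ENNReal.ofReal (Real.exp (3*L*m/4) * Real.exp (-(4*L*(1 - E0))) ^ m) := by
        rw [← ENNReal.ofReal_pow (Real.exp_pos _).le,
          ← ENNReal.ofReal_mul (Real.exp_pos _).le]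
    _ ≤ ENNReal.ofReal (Real.exp (-L * m / 8)) := by
        apply ENNReal.ofReal_le_ofReal
        rw [← Real.exp_nat_mul, ← Real.exp_add]
        apply Real.exp_le_exp.mpr
        have hkc : (3:ℝ)/4 - 4*(1 - E0) ≤ -(8⁻¹) := by rw [hE0]; exact key_const
        have hm0 : (0:ℝ) ≤ (m:ℝ) := Nat.cast_nonneg m
        have := mul_le_mul_of_nonneg_left hkc (mul_nonneg hL.le hm0)
        nlinarith

def Wset (n : ℕ) (L : ℝ) (b b' : Fin n) : Set (Fin n → ℝ) :=
  {r | 4*L < |r b - r b'| ∧ ((countBetween r (r b) (r b') : ℝ)) ≤ 2 + 3*L*((n:ℝ)-2)}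


lemma countBetween_symm {n : ℕ} (r : Fin n → ℝ) (s t : ℝ) :
    countBetween r s t = countBetween r t s := by
  unfold countBetween
  rw [min_comm, max_comm]

lemma Wset_symm {n : ℕ} (L : ℝ) (b b' : Fin n) : Wset n L b b' = Wset n L b' b := by
  ext r
  simp only [Wset, Set.mem_setOf_eq]
  rw [abs_sub_comm, countBetween_symm]

lemma countBetween_split {n : ℕ} (r : Fin n → ℝ) {b b' : Fin n} (hbb : b ≠ b') :
    (countBetween r (r b) (r b') : ℝ) =
      2 + ((Finset.univ.filter fun j : {i : Fin n // ¬(i = b ∨ i = b')} =>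
        min (r b) (r b') ≤ r j.val ∧ r j.val ≤ max (r b) (r b')).card : ℝ) := by
  classical
  unfold countBetween
  set P : Fin n → Prop := fun m => min (r b) (r b') ≤ r m ∧ r m ≤ max (r b) (r b') with hP
  have hsplit : (Finset.univ : Finset (Fin n)) = ({b, b'} : Finset (Fin n)) ∪ ({b, b'} : Finset (Fin n))ᶜ :=
    (Finset.union_compl _).symm
  rw [show (Finset.univ.filter fun m => min (r b) (r b') ≤ r m ∧ r m ≤ max (r b) (r b')) = Finset.univ.filter P from rfl]
  rw [hsplit, Finset.filter_union, Finset.card_union_of_disjoint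
    (Finset.disjoint_filter_filter (disjoint_compl_right))]
  have h1 : ({b, b'} : Finset (Fin n)).filter P = {b, b'} := by
    apply Finset.filter_true_of_mem
    intro x hx
    rcases Finset.mem_insert.mp hx with h | h
    · subst h; exact ⟨min_le_left _ _, le_max_left _ _⟩
    · rw [Finset.mem_singleton] at h; subst h
      exact ⟨min_le_right _ _, le_max_right _ _⟩
  have h2 : (({b, b'} : Finset (Fin n))ᶜ.filter P).card =
      ((Finset.univ.filter fun j : {i : Fin n // ¬(i = b ∨ i = b')} => P j.val).card) := by
    rw [Finset.card_filter, Finset.card_filter]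
    exact Finset.sum_subtype _ (fun x => by simp) _
  rw [h1, h2, Finset.card_insert_of_notMem (by simp [hbb]), Finset.card_singleton]
  push_cast
  ring

lemma measurable_countBetween {n : ℕ} (b b' : Fin n) :
    Measurable fun r : Fin n → ℝ => ((countBetween r (r b) (r b')) : ℝ) := by
  classical
  unfold countBetween
  simp only [Finset.natCast_card_filter]
  apply Finset.measurable_sum
  intro m _
  apply Measurable.ite _ measurable_const measurable_const
  exact (measurableSet_le ((measurable_pi_apply b).min (measurable_pi_apply b'))
      (measurable_pi_apply m)).inter
    (measurableSet_le (measurable_pi_apply m)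
      ((measurable_pi_apply b).max (measurable_pi_apply b')))

lemma measurable_Wset {n : ℕ} (L : ℝ) (b b' : Fin n) : MeasurableSet (Wset n L b b') := by
  apply MeasurableSet.inter
  · exact measurableSet_lt (measurable_const : Measurable fun _ : Fin n → ℝ => 4*L)
      (((measurable_pi_apply b).sub (measurable_pi_apply b')).abs)
  · exact measurableSet_le (measurable_countBetween b b') measurable_const

lemma W_bound {n : ℕ} {L : ℝ} (hL : 0 < L) (hn : 2 ≤ n) (b b' : Fin n) (hbb : b ≠ b') :
    (Measure.pi fun _ : Fin n => unif) (Wset n L b b')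
      ≤ ENNReal.ofReal (Real.exp (-L * ((n:ℝ)-2) / 8)) := by
  classical
  set μn := (Measure.pi fun _ : Fin n => unif) with hμn
  set p : Fin n → Prop := fun i => i = b ∨ i = b' with hp
  have hcard2 : Fintype.card {i : Fin n // p i} = 2 := by
    rw [Fintype.card_subtype]
    have he : (Finset.univ.filter p) = {b, b'} := by
      ext x; simp [hp]
    rw [he, Finset.card_insert_of_notMem (by simp [hbb]), Finset.card_singleton]
  have hcard : ((Fintype.card {i : Fin n // ¬ p i}) : ℝ) = (n:ℝ) - 2 := by
    rw [Fintype.card_subtype_compl, hcard2, Fintype.card_fin, Nat.cast_sub hn]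
    norm_num
  set T : Set (Fin n → ℝ) := {r | ∀ i, r i ∈ Set.Icc (0:ℝ) 1} with hTdef
  have hT : μn Tᶜ = 0 := by
    have hTc : Tᶜ = ⋃ i, (fun r : Fin n → ℝ => r i) ⁻¹' (Set.Icc (0:ℝ) 1)ᶜ := by
      ext r
      simp [hTdef]
    rw [hTc]
    apply measure_iUnion_null
    intro i
    apply Measure.pi_eval_preimage_null
    rw [unif, Measure.restrict_apply measurableSet_Icc.compl]
    simp
  have hWT : μn (Wset n L b b') ≤ μn (Wset n L b b' ∩ T) := by
    calc μn (Wset n L b b')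
        ≤ μn (Wset n L b b' ∩ T) + μn (Wset n L b b' \ T) :=
          measure_le_inter_add_diff _ _ _
      _ = μn (Wset n L b b' ∩ T) := by
          rw [measure_mono_null (Set.diff_subset_compl _ _) hT, add_zero]
  set ib : {i : Fin n // p i} := ⟨b, Or.inl rfl⟩ with hib
  set ib' : {i : Fin n // p i} := ⟨b', Or.inr rfl⟩ with hib'
  set U : Set (({i : Fin n // p i} → ℝ) × ({i : Fin n // ¬ p i} → ℝ)) :=
    {z | (z.1 ib ∈ Set.Icc (0:ℝ) 1) ∧ (z.1 ib' ∈ Set.Icc (0:ℝ) 1) ∧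
      4*L < |z.1 ib - z.1 ib'| ∧
      ((Finset.univ.filter fun j : {i : Fin n // ¬ p i} =>
          min (z.1 ib) (z.1 ib') ≤ z.2 j ∧ z.2 j ≤ max (z.1 ib) (z.1 ib')).card : ℝ)
        ≤ 3*L*((n:ℝ)-2)} with hU
  set e := MeasurableEquiv.piEquivPiSubtypeProd (fun _ : Fin n => ℝ) p with hedef
  have hmp := measurePreserving_piEquivPiSubtypeProd (fun _ : Fin n => unif) p
  have hsub : Wset n L b b' ∩ T ⊆ e ⁻¹' U := by
    rintro r ⟨⟨h4, hcnt⟩, hTr⟩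
    have h1 : (e r).1 ib = r b := rfl
    have h1' : (e r).1 ib' = r b' := rfl
    have h2 : ∀ j : {i : Fin n // ¬ p i}, (e r).2 j = r j.val := fun _ => rfl
    refine ⟨?_, ?_, ?_, ?_⟩
    · rw [h1]; exact hTr b
    · rw [h1']; exact hTr b'
    · rw [h1, h1']; exact h4
    · have hsplit := countBetween_split r (show b ≠ b' from hbb)
      rw [hsplit] at hcnt
      have : ((Finset.univ.filter fun j : {i : Fin n // ¬(i = b ∨ i = b')} =>
          min (r b) (r b') ≤ r j.val ∧ r j.val ≤ max (r b) (r b')).card : ℝ)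
          ≤ 3*L*((n:ℝ)-2) := by linarith
      simpa [h1, h1', h2, hp] using this
  have hUmeas : MeasurableSet U := by
    have hf1 : Measurable fun z : ({i : Fin n // p i} → ℝ) × ({i : Fin n // ¬ p i} → ℝ) =>
        z.1 ib := (measurable_pi_apply ib).comp measurable_fst
    have hf1' : Measurable fun z : ({i : Fin n // p i} → ℝ) × ({i : Fin n // ¬ p i} → ℝ) =>
        z.1 ib' := (measurable_pi_apply ib').comp measurable_fst
    have hA : MeasurableSet {z : ({i : Fin n // p i} → ℝ) × ({i : Fin n // ¬ p i} → ℝ) |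
        z.1 ib ∈ Set.Icc (0:ℝ) 1} := hf1 measurableSet_Icc
    have hB : MeasurableSet {z : ({i : Fin n // p i} → ℝ) × ({i : Fin n // ¬ p i} → ℝ) |
        z.1 ib' ∈ Set.Icc (0:ℝ) 1} := hf1' measurableSet_Icc
    have hC : MeasurableSet {z : ({i : Fin n // p i} → ℝ) × ({i : Fin n // ¬ p i} → ℝ) |
        4*L < |z.1 ib - z.1 ib'|} :=
      measurableSet_lt measurable_const ((hf1.sub hf1').abs)
    have hD : MeasurableSet {z : ({i : Fin n // p i} → ℝ) × ({i : Fin n // ¬ p i} → ℝ) |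
        ((Finset.univ.filter fun j : {i : Fin n // ¬ p i} =>
          min (z.1 ib) (z.1 ib') ≤ z.2 j ∧ z.2 j ≤ max (z.1 ib) (z.1 ib')).card : ℝ)
        ≤ 3*L*((n:ℝ)-2)} := by
      refine measurableSet_le ?_ measurable_const
      simp only [Finset.natCast_card_filter]
      apply Finset.measurable_sum
      intro j _
      apply Measurable.ite _ measurable_const measurable_const
      exact (measurableSet_le (hf1.min hf1')
          ((measurable_pi_apply j).comp measurable_snd)).inter
        (measurableSet_le ((measurable_pi_apply j).comp measurable_snd) (hf1.max hf1'))
    exact hA.inter (hB.inter (hC.inter hD))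
  have hinner : ∀ s : {i : Fin n // p i} → ℝ,
      (Measure.pi fun _ : {i : Fin n // ¬ p i} => unif) (Prod.mk s ⁻¹' U)
        ≤ ENNReal.ofReal (Real.exp (-L * ((n:ℝ)-2) / 8)) := by
    intro s
    by_cases hs : s ib ∈ Set.Icc (0:ℝ) 1 ∧ s ib' ∈ Set.Icc (0:ℝ) 1 ∧ 4*L < |s ib - s ib'|
    · obtain ⟨hb1, hb2, h4⟩ := hs
      have h0 : 0 ≤ min (s ib) (s ib') := le_min hb1.1 hb2.1
      have h1 : max (s ib) (s ib') ≤ 1 := max_le hb1.2 hb2.2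
      have hac : 4*L ≤ max (s ib) (s ib') - min (s ib) (s ib') := by
        rw [max_sub_min_eq_abs, abs_sub_comm]; exact h4.le
      have hss : Prod.mk s ⁻¹' U ⊆ {u : {i : Fin n // ¬ p i} → ℝ |
          ((Finset.univ.filter fun j => min (s ib) (s ib') ≤ u j ∧
            u j ≤ max (s ib) (s ib')).card : ℝ)
          ≤ 3*L*(Fintype.card {i : Fin n // ¬ p i}) } := by
        intro u hu
        rw [Set.mem_setOf_eq, hcard]
        exact hu.2.2.2
      calc (Measure.pi fun _ : {i : Fin n // ¬ p i} => unif) (Prod.mk s ⁻¹' U)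
          ≤ _ := measure_mono hss
        _ ≤ ENNReal.ofReal (Real.exp
            (-L * (Fintype.card {i : Fin n // ¬ p i}) / 8)) := chernoff hL hac h0 h1
        _ = ENNReal.ofReal (Real.exp (-L * ((n:ℝ)-2) / 8)) := by rw [hcard]
    · have hempty : Prod.mk s ⁻¹' U = ∅ := by
        ext u
        simp only [Set.mem_preimage, Set.mem_empty_iff_false, iff_false, hU,
          Set.mem_setOf_eq]
        intro hu
        exact hs ⟨hu.1, hu.2.1, hu.2.2.1⟩
      rw [hempty]
      simp
  calc μn (Wset n L b b') ≤ μn (Wset n L b b' ∩ T) := hWT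
    _ ≤ μn (e ⁻¹' U) := measure_mono hsub
    _ = ((Measure.pi fun _ : {i : Fin n // p i} => unif).prod
          (Measure.pi fun _ : {i : Fin n // ¬ p i} => unif)) U :=
        hmp.measure_preimage_equiv U
    _ = ∫⁻ s, (Measure.pi fun _ : {i : Fin n // ¬ p i} => unif) (Prod.mk s ⁻¹' U)
          ∂(Measure.pi fun _ : {i : Fin n // p i} => unif) := Measure.prod_apply hUmeas
    _ ≤ ∫⁻ _, ENNReal.ofReal (Real.exp (-L * ((n:ℝ)-2) / 8))
          ∂(Measure.pi fun _ : {i : Fin n // p i} => unif) := lintegral_mono hinner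
    _ = ENNReal.ofReal (Real.exp (-L * ((n:ℝ)-2) / 8)) := by
        rw [lintegral_const, measure_univ, mul_one]

/-- `Pr[B5] ≤ n²·exp(−L(n−2)/8)`. -/
theorem stmt12 (n : ℕ) (L : ℝ) (hL : 0 < L) :
    ratingsMeasure n {ω | EventB5 n L ω.1 ω.2} ≤
      ENNReal.ofReal ((n:ℝ)^2 * Real.exp (-L * ((n:ℝ) - 2) / 8)) := by
  classical
  by_cases hn : 2 ≤ n
  swap
  · have hempty : {ω : (Fin n → ℝ) × (Fin n → ℝ) | EventB5 n L ω.1 ω.2} = ∅ := by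
      ext ω
      simp only [Set.mem_setOf_eq, Set.mem_empty_iff_false, iff_false]
      rintro ⟨a, a', b, b', hne, -⟩
      exact hne (Fin.ext (by omega))
    rw [hempty, measure_empty]
    exact zero_le
  set B := ENNReal.ofReal (Real.exp (-L * ((n:ℝ) - 2) / 8)) with hB
  set P : Finset (Fin n × Fin n) := Finset.univ.filter (fun q => q.1 < q.2) with hP
  set AM : Set ((Fin n → ℝ) × (Fin n → ℝ)) :=
    ⋃ q ∈ P, {ω : (Fin n → ℝ) × (Fin n → ℝ) | ω.1 ∈ Wset n L q.1 q.2} with hAM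
  set AW : Set ((Fin n → ℝ) × (Fin n → ℝ)) :=
    ⋃ q ∈ P, {ω : (Fin n → ℝ) × (Fin n → ℝ) | ω.2 ∈ Wset n L q.1 q.2} with hAW
  have hsubset : {ω : (Fin n → ℝ) × (Fin n → ℝ) | EventB5 n L ω.1 ω.2} ⊆ AM ∪ AW := by
    rintro ω ⟨a, a', b, b', hne, -, -, hcase⟩
    rcases hcase with ⟨h4, hc⟩ | ⟨h4, hc⟩
    · right
      have hbb : b ≠ b' := by
        rintro rfl
        rw [sub_self, abs_zero] at h4
        linarith
      rcases lt_or_gt_of_ne hbb with h | h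
      · exact Set.mem_iUnion₂.mpr ⟨(b, b'), by simp [hP, h],
          (show ω.2 ∈ Wset n L b b' from ⟨h4, hc⟩)⟩
      · have hmem : ω.2 ∈ Wset n L b' b := by
          rw [Wset_symm]
          exact ⟨h4, hc⟩
        exact Set.mem_iUnion₂.mpr ⟨(b', b), by simp [hP, h], hmem⟩
    · left
      rcases lt_or_gt_of_ne hne with h | h
      · exact Set.mem_iUnion₂.mpr ⟨(a, a'), by simp [hP, h],
          (show ω.1 ∈ Wset n L a a' from ⟨h4, hc⟩)⟩
      · have hmem : ω.1 ∈ Wset n L a' a := by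
          rw [Wset_symm]
          exact ⟨h4, hc⟩
        exact Set.mem_iUnion₂.mpr ⟨(a', a), by simp [hP, h], hmem⟩
  have hMW : ∀ q ∈ P, ratingsMeasure n
      {ω : (Fin n → ℝ) × (Fin n → ℝ) | ω.1 ∈ Wset n L q.1 q.2} ≤ B := by
    intro q hq
    have hlt : q.1 < q.2 := by simpa [hP] using hq
    have hrw : {ω : (Fin n → ℝ) × (Fin n → ℝ) | ω.1 ∈ Wset n L q.1 q.2}
        = (Wset n L q.1 q.2) ×ˢ (Set.univ : Set (Fin n → ℝ)) := by
      ext ω; simp [Set.mem_prod]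
    rw [ratingsMeasure, hrw, Measure.prod_prod, measure_univ, mul_one]
    exact W_bound hL hn q.1 q.2 (ne_of_lt hlt)
  have hWW : ∀ q ∈ P, ratingsMeasure n
      {ω : (Fin n → ℝ) × (Fin n → ℝ) | ω.2 ∈ Wset n L q.1 q.2} ≤ B := by
    intro q hq
    have hlt : q.1 < q.2 := by simpa [hP] using hq
    have hrw : {ω : (Fin n → ℝ) × (Fin n → ℝ) | ω.2 ∈ Wset n L q.1 q.2}
        = (Set.univ : Set (Fin n → ℝ)) ×ˢ (Wset n L q.1 q.2) := by
      ext ω; simp [Set.mem_prod]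
    rw [ratingsMeasure, hrw, Measure.prod_prod, measure_univ, one_mul]
    exact W_bound hL hn q.1 q.2 (ne_of_lt hlt)
  have hcardP : P.card + P.card ≤ n * n := by
    set P' : Finset (Fin n × Fin n) := Finset.univ.filter (fun q => q.2 < q.1) with hP'
    have hcc : P.card = P'.card := by
      apply Finset.card_bij' (fun q _ => Prod.swap q) (fun q _ => Prod.swap q)
      · intro q hq; simp only [hP, hP', Finset.mem_filter, Finset.mem_univ, true_and] at hq ⊢
        exact hq
      · intro q hq; simp only [hP, hP', Finset.mem_filter, Finset.mem_univ, true_and] at hq ⊢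
        exact hq
      · intro q _; simp
      · intro q _; simp
    have hdisj : Disjoint P P' := by
      rw [Finset.disjoint_left]
      intro q hq hq'
      simp only [hP, hP', Finset.mem_filter, Finset.mem_univ, true_and] at hq hq'
      exact lt_asymm hq hq'
    calc P.card + P.card = P.card + P'.card := by rw [hcc]
      _ = (P ∪ P').card := (Finset.card_union_of_disjoint hdisj).symm
      _ ≤ (Finset.univ : Finset (Fin n × Fin n)).card :=
          Finset.card_le_card (Finset.subset_univ _)
      _ = n * n := by simp [Finset.card_univ]
  calc ratingsMeasure n {ω | EventB5 n L ω.1 ω.2}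
      ≤ ratingsMeasure n (AM ∪ AW) := measure_mono hsubset
    _ ≤ ratingsMeasure n AM + ratingsMeasure n AW := measure_union_le _ _
    _ ≤ (∑ q ∈ P, ratingsMeasure n
          {ω : (Fin n → ℝ) × (Fin n → ℝ) | ω.1 ∈ Wset n L q.1 q.2}) +
        (∑ q ∈ P, ratingsMeasure n
          {ω : (Fin n → ℝ) × (Fin n → ℝ) | ω.2 ∈ Wset n L q.1 q.2}) :=
        add_le_add (measure_biUnion_finset_le _ _) (measure_biUnion_finset_le _ _)
    _ ≤ P.card • B + P.card • B :=
        add_le_add (Finset.sum_le_card_nsmul _ _ _ hMW) (Finset.sum_le_card_nsmul _ _ _ hWW)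
    _ = ((P.card + P.card : ℕ) : ℝ≥0∞) * B := by
        rw [← add_nsmul, nsmul_eq_mul]
    _ ≤ ((n * n : ℕ) : ℝ≥0∞) * B := by
        apply mul_le_mul_left
        exact_mod_cast Nat.cast_le.mpr hcardP
    _ = ENNReal.ofReal ((n:ℝ)^2 * Real.exp (-L * ((n:ℝ) - 2) / 8)) := by
        rw [hB, ← ENNReal.ofReal_natCast (n*n), ← ENNReal.ofReal_mul (Nat.cast_nonneg _)]
        congr 1
        push_cast
        ring

end
end
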